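/- Let X_1,...,X_L, Y_1,...,Y_L be i.i.d. rate-1 exponentials, S_l = min{X_l,Y_l}, l_0 = argmax_l S_l, Z_1 = X_{l_0}, Z_2 = Y_{l_0}. Then the joint density of (Z_1, Z_2) equals L e^{-(z_1+z_2)}(1 - e^{-2 min{z_1,z_2}})^{L-1} for z_1, z_2 ≥ 0 and 0 otherwise. -/

import Mathlib

open MeasureTheory ProbabilityTheory Real Filter Topology Set
open scoped ENNReal





lemma pi_fintype_irrel {κ : Type*} {β : κ → Type*} [∀ i, MeasurableSpace (β i)]
    (F1 F2 : Fintype κ) (ν : ∀ i, Measure (β i)) :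
    @Measure.pi κ β F1 _ ν = @Measure.pi κ β F2 _ ν := by
  cases Subsingleton.elim F1 F2; rfl

lemma my_mp_eval {κ : Type*} [Fintype κ] {β : Type*} [MeasurableSpace β]
    (ν : Measure β) [IsProbabilityMeasure ν] (l : κ) :
    MeasurePreserving (Function.eval l) (Measure.pi fun _ : κ => ν) ν := by
  classical
  refine ⟨measurable_pi_apply l, ?_⟩
  ext s hs
  rw [Measure.map_apply (measurable_pi_apply l) hs]
  have hset : Function.eval l ⁻¹' s = Set.pi Set.univ (Function.update (fun _ : κ => (Set.univ : Set β)) l s) := by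
    ext g
    simp only [Set.mem_preimage, Set.mem_pi, Set.mem_univ, forall_true_left, Function.eval]
    constructor
    · intro hg j
      by_cases hj : j = l
      · subst hj; simpa using hg
      · simp [Function.update_of_ne hj]
    · intro hg
      have := hg l
      simpa using this
  rw [hset, Measure.pi_pi]
  rw [Finset.prod_eq_single l (fun j _ hj => by simp [Function.update_of_ne hj]) (by simp)]
  simp

section Aux
variable {ι : Type*} [Fintype ι] [DecidableEq ι]

lemma aux_pi_cond (mp : Measure (ℝ × ℝ)) [IsProbabilityMeasure mp] (l : ι)
    (A : Set (ℝ × ℝ)) (hA : MeasurableSet A) (B : ι → Set ((ℝ × ℝ) × (ℝ × ℝ)))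
    (hB : ∀ k, MeasurableSet (B k)) :
    Measure.pi (fun _ : ι => mp) {g | g l ∈ A ∧ ∀ k, ¬ k = l → (g l, g k) ∈ B k}
      = ∫⁻ z in A, ∏ k : {k : ι // ¬ k = l}, mp {w | (z, w) ∈ B k.1} ∂mp := by
  classical
  set e := MeasurableEquiv.piEquivPiSubtypeProd (fun _ : ι => ℝ × ℝ) (fun k => k = l) with he
  set dd : {k : ι // k = l} := ⟨l, rfl⟩ with hdd
  set T : Set ((∀ _ : {k : ι // k = l}, ℝ × ℝ) × (∀ _ : {k : ι // ¬ k = l}, ℝ × ℝ)) :=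
    {y | y.1 dd ∈ A ∧ ∀ k : {k : ι // ¬ k = l}, (y.1 dd, y.2 k) ∈ B k.1} with hT
  have hTmeas : MeasurableSet T := by
    have : T = ((fun y : (∀ _ : {k : ι // k = l}, ℝ × ℝ) × (∀ _ : {k : ι // ¬ k = l}, ℝ × ℝ) => y.1 dd) ⁻¹' A)
        ∩ ⋂ k : {k : ι // ¬ k = l}, (fun y : (∀ _ : {k : ι // k = l}, ℝ × ℝ) × (∀ _ : {k : ι // ¬ k = l}, ℝ × ℝ) => (y.1 dd, y.2 k)) ⁻¹' B k.1 := by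
      ext y; simp [hT, Set.mem_iInter]
    rw [this]
    refine MeasurableSet.inter (((measurable_pi_apply dd).comp measurable_fst) hA) ?_
    exact MeasurableSet.iInter fun k =>
      (((measurable_pi_apply dd).comp measurable_fst).prodMk
        ((measurable_pi_apply k).comp measurable_snd)) (hB k.1)
  have hGT : {g : ι → ℝ × ℝ | g l ∈ A ∧ ∀ k, ¬ k = l → (g l, g k) ∈ B k} = e ⁻¹' T := by
    ext g
    simp only [hT, Set.mem_preimage, Set.mem_setOf_eq, he,
      MeasurableEquiv.piEquivPiSubtypeProd, Equiv.piEquivPiSubtypeProd, MeasurableEquiv.coe_mk,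
      Equiv.coe_fn_mk, Subtype.forall, hdd]
  have hmp := (measurePreserving_piEquivPiSubtypeProd (fun _ : ι => mp) (fun k => k = l)).map_eq
  rw [hGT, ← Measure.map_apply e.measurable hTmeas, hmp, Measure.prod_apply hTmeas]
  have h2 : ∀ u : ∀ _ : {k : ι // k = l}, ℝ × ℝ,
      (Measure.pi fun _ : {k : ι // ¬ k = l} => mp) (Prod.mk u ⁻¹' T)
        = Set.indicator A (fun z => ∏ k : {k : ι // ¬ k = l}, mp {w | (z, w) ∈ B k.1}) (u dd) := by
    intro u
    by_cases hu : u dd ∈ A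
    · have hpre : Prod.mk u ⁻¹' T = Set.pi Set.univ (fun k : {k : ι // ¬ k = l} =>
          {w | (u dd, w) ∈ B k.1}) := by
        ext h
        simp [hT, hu, Set.mem_pi]
      rw [hpre, Measure.pi_pi, Set.indicator_of_mem hu]
    · have hpre : Prod.mk u ⁻¹' T = ∅ := by
        ext h; simp [hT, hu]
      rw [hpre, Set.indicator_of_notMem hu, measure_empty]
  simp_rw [h2]
  have hΦ : Measurable (Set.indicator A
      (fun z => ∏ k : {k : ι // ¬ k = l}, mp {w | (z, w) ∈ B k.1})) := by
    refine Measurable.indicator ?_ hA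
    refine Finset.measurable_prod _ fun k _ => ?_
    exact measurable_measure_prodMk_left (hB k.1)
  refine Eq.trans ?_ (lintegral_indicator hA _)
  have h4 := (my_mp_eval mp dd).lintegral_comp hΦ
  convert h4 using 2
  exact pi_fintype_irrel _ _ _

end Aux

lemma expMeasure_one_eq : expMeasure 1 = volume.withDensity (exponentialPDF 1) := rfl

lemma exp_singleton (c : ℝ) : expMeasure 1 {c} = 0 := by
  rw [expMeasure_one_eq, withDensity_apply _ (measurableSet_singleton c),
    Measure.restrict_eq_zero.mpr (by simp), lintegral_zero_measure]

lemma exp_Iic (c : ℝ) (hc : 0 ≤ c) :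
    expMeasure 1 (Iic c) = ENNReal.ofReal (1 - Real.exp (-c)) := by
  haveI : IsProbabilityMeasure (expMeasure 1) := isProbabilityMeasure_expMeasure one_pos
  have h := ofReal_cdf (μ := expMeasure 1) c
  have h2 : cdf (expMeasure 1) c = 1 - Real.exp (-c) := by
    have := cdf_expMeasure_eq (r := 1) one_pos c
    rw [this, if_pos hc, one_mul]
  rw [← h, h2]

lemma exp_Ici (c : ℝ) (hc : 0 ≤ c) :
    expMeasure 1 (Ici c) = ENNReal.ofReal (Real.exp (-c)) := by
  haveI : IsProbabilityMeasure (expMeasure 1) := isProbabilityMeasure_expMeasure one_pos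
  have hIio : expMeasure 1 (Iio c) = ENNReal.ofReal (1 - Real.exp (-c)) := by
    have : Iic c = Iio c ∪ {c} := by
      ext x; simp [le_iff_lt_or_eq]
    have hu := measure_union (μ := expMeasure 1)
      (Set.disjoint_singleton_right.mpr (by exact fun h => lt_irrefl c (Set.mem_Iio.mp h))) (measurableSet_singleton c)
    rw [← this, exp_Iic c hc, exp_singleton, add_zero] at hu
    rw [← hu]
  have hcompl : Ici c = (Iio c)ᶜ := by simp
  rw [hcompl, measure_compl measurableSet_Iio (measure_ne_top _ _), hIio,
    measure_univ]
  rw [← ENNReal.ofReal_one, ← ENNReal.ofReal_sub _ (sub_nonneg.mpr (Real.exp_le_one_iff.mpr (neg_nonpos.mpr hc)))]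
  · congr 1
    have := Real.exp_nonneg (-c)
    ring
  -- side goal for ofReal_sub? none

lemma mp_min_lt (c : ℝ) (hc : 0 ≤ c) :
    (expMeasure 1).prod (expMeasure 1) {w : ℝ × ℝ | min w.1 w.2 < c}
      = ENNReal.ofReal (1 - Real.exp (-(2 * c))) := by
  haveI : IsProbabilityMeasure (expMeasure 1) := isProbabilityMeasure_expMeasure one_pos
  have hset : {w : ℝ × ℝ | min w.1 w.2 < c}ᶜ = Ici c ×ˢ Ici c := by
    ext w
    simp only [Set.mem_compl_iff, Set.mem_setOf_eq, not_lt, le_min_iff, Set.mem_prod,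
      Set.mem_Ici]
  have hmeas : MeasurableSet {w : ℝ × ℝ | min w.1 w.2 < c} :=
    measurableSet_lt (measurable_fst.min measurable_snd) measurable_const
  have := measure_compl (μ := (expMeasure 1).prod (expMeasure 1)) hmeas (measure_ne_top _ _)
  rw [hset, Measure.prod_prod, exp_Ici c hc, ← ENNReal.ofReal_mul (Real.exp_nonneg _),
    ← Real.exp_add, measure_univ] at this
  have h2 : (expMeasure 1).prod (expMeasure 1) {w : ℝ × ℝ | min w.1 w.2 < c}
      = 1 - ENNReal.ofReal (Real.exp (-c + -c)) := by
    rw [this, ENNReal.sub_sub_cancel ENNReal.one_ne_top prob_le_one]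
  rw [h2, ← ENNReal.ofReal_one, ← ENNReal.ofReal_sub _ (Real.exp_nonneg _)]
  congr 1
  ring_nf

lemma mp_min_eq (c : ℝ) :
    (expMeasure 1).prod (expMeasure 1) {w : ℝ × ℝ | min w.1 w.2 = c} = 0 := by
  haveI : IsProbabilityMeasure (expMeasure 1) := isProbabilityMeasure_expMeasure one_pos
  have hsub : {w : ℝ × ℝ | min w.1 w.2 = c} ⊆ ({c} ×ˢ univ) ∪ (univ ×ˢ {c}) := by
    intro w hw
    rcases min_cases w.1 w.2 with ⟨h1, _⟩ | ⟨h1, _⟩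
    · left; exact ⟨by rw [← hw, h1]; rfl, trivial⟩
    · right; exact ⟨trivial, by rw [← hw, h1]; rfl⟩
  refine le_antisymm ((measure_mono hsub).trans ((measure_union_le _ _).trans ?_)) zero_le
  rw [Measure.prod_prod, Measure.prod_prod, exp_singleton]
  simp

lemma mp_eq_withDensity : (expMeasure 1).prod (expMeasure 1)
    = (volume : Measure (ℝ × ℝ)).withDensity
        (fun z => exponentialPDF 1 z.1 * exponentialPDF 1 z.2) := by
  haveI : IsProbabilityMeasure (expMeasure 1) := isProbabilityMeasure_expMeasure one_pos
  have hm : Measurable (exponentialPDF 1) :=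
    (measurable_exponentialPDFReal 1).ennreal_ofReal
  refine Measure.prod_eq fun s t hs ht => ?_
  rw [withDensity_apply _ (hs.prod ht), MeasureTheory.Measure.volume_eq_prod,
    ← Measure.prod_restrict,
    lintegral_prod_mul hm.aemeasurable hm.aemeasurable,
    expMeasure_one_eq, withDensity_apply _ hs, withDensity_apply _ ht]


lemma aux_meas_cond {ι : Type*} [Fintype ι] (l : ι)
    (A : Set (ℝ × ℝ)) (hA : MeasurableSet A) (B : ι → Set ((ℝ × ℝ) × (ℝ × ℝ)))
    (hB : ∀ k, MeasurableSet (B k)) :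
    MeasurableSet {g : ι → ℝ × ℝ | g l ∈ A ∧ ∀ k, ¬ k = l → (g l, g k) ∈ B k} := by
  have hset : {g : ι → ℝ × ℝ | g l ∈ A ∧ ∀ k, ¬ k = l → (g l, g k) ∈ B k}
      = ((fun g : ι → ℝ × ℝ => g l) ⁻¹' A)
        ∩ ⋂ k : ι, ⋂ (_ : ¬ k = l), (fun g : ι → ℝ × ℝ => (g l, g k)) ⁻¹' B k := by
    ext g; simp [Set.mem_iInter]
  rw [hset]
  exact ((measurable_pi_apply l) hA).inter (MeasurableSet.iInter fun k =>
    MeasurableSet.iInter fun _ =>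
      ((measurable_pi_apply l).prodMk (measurable_pi_apply k)) (hB k))

/-- Let `X_1, …, X_L, Y_1, …, Y_L` be i.i.d. rate-1 exponential random variables,
`S_l = min {X_l, Y_l}`, `l₀ = argmax_l S_l`, `Z₁ = X_{l₀}`, `Z₂ = Y_{l₀}`.
Then the joint density of `(Z₁, Z₂)` is
`L e^{-(z₁+z₂)} (1 - e^{-2 min{z₁,z₂}})^{L-1}` for `z₁, z₂ ≥ 0` and `0` otherwise. -/
theorem joint_density_selected_relay_gains
    {Ω : Type*} [MeasurableSpace Ω] (μ : Measure Ω) [IsProbabilityMeasure μ]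
    (L : ℕ) (hL : 0 < L) (X Y : Fin L → Ω → ℝ)
    (hX : ∀ l, Measurable (X l)) (hY : ∀ l, Measurable (Y l))
    (hindep : iIndepFun (Sum.elim X Y) μ)
    (hXlaw : ∀ l, μ.map (X l) = expMeasure 1)
    (hYlaw : ∀ l, μ.map (Y l) = expMeasure 1)
    (S : Fin L → Ω → ℝ) (hSdef : ∀ l ω, S l ω = min (X l ω) (Y l ω))
    (l₀ : Ω → Fin L) (hl₀meas : Measurable l₀)
    (hl₀ : ∀ ω l, S l ω ≤ S (l₀ ω) ω)
    (Z₁ Z₂ : Ω → ℝ) (hZ₁ : ∀ ω, Z₁ ω = X (l₀ ω) ω) (hZ₂ : ∀ ω, Z₂ ω = Y (l₀ ω) ω) :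
    μ.map (fun ω => (Z₁ ω, Z₂ ω)) =
      (volume : Measure (ℝ × ℝ)).withDensity
        (fun z => ENNReal.ofReal
          (if 0 ≤ z.1 ∧ 0 ≤ z.2 then
            L * Real.exp (-(z.1 + z.2)) * (1 - Real.exp (-2 * min z.1 z.2)) ^ (L - 1)
          else 0)) := by
  classical
  haveI : IsProbabilityMeasure (expMeasure 1) := isProbabilityMeasure_expMeasure one_pos
  set m : Measure ℝ := expMeasure 1 with hm
  set mp : Measure (ℝ × ℝ) := m.prod m with hmp
  haveI : IsProbabilityMeasure mp := by rw [hmp]; infer_instance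
  -- the joint vector V and its law
  set V : Ω → (Fin L ⊕ Fin L) → ℝ := fun ω i => Sum.elim X Y i ω with hV
  have hVcoord : ∀ i, Measurable (Sum.elim X Y i) := by
    rintro (l | l); exacts [hX l, hY l]
  have hVmeas : Measurable V := measurable_pi_lambda _ hVcoord
  have hVlaw : μ.map V = Measure.pi (fun _ : Fin L ⊕ Fin L => m) := by
    refine (Measure.pi_eq (fun s hs => ?_)).symm
    rw [Measure.map_apply hVmeas (MeasurableSet.univ_pi hs)]
    have hpre : V ⁻¹' (Set.pi Set.univ s) = ⋂ i, Sum.elim X Y i ⁻¹' s i := by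
      ext ω; simp [hV, Set.mem_pi]
    rw [hpre, hindep.meas_iInter (fun i => ⟨s i, hs i, rfl⟩)]
    refine Finset.prod_congr rfl fun i _ => ?_
    rcases i with l | l
    · rw [show Sum.elim X Y (Sum.inl l) = X l from rfl,
        ← Measure.map_apply (hX l) (hs _), hXlaw l]
    · rw [show Sum.elim X Y (Sum.inr l) = Y l from rfl,
        ← Measure.map_apply (hY l) (hs _), hYlaw l]
  -- the paired vector W and its law
  set W : Ω → (Fin L → ℝ × ℝ) := fun ω l => (X l ω, Y l ω) with hW
  have hWmeas : Measurable W :=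
    measurable_pi_lambda _ fun l => (hX l).prodMk (hY l)
  have hWlaw : μ.map W = Measure.pi (fun _ : Fin L => mp) := by
    set e1 := MeasurableEquiv.sumPiEquivProdPi (fun _ : Fin L ⊕ Fin L => ℝ) with he1
    set e2 := (MeasurableEquiv.arrowProdEquivProdArrow ℝ ℝ (Fin L)).symm with he2
    have hψ : W = (⇑e2 ∘ ⇑e1) ∘ V := by
      funext ω
      rfl
    have hpres1 := (measurePreserving_sumPiEquivProdPi (fun _ : Fin L ⊕ Fin L => m))
    have hpres2 := MeasurePreserving.symm (MeasurableEquiv.arrowProdEquivProdArrow ℝ ℝ (Fin L))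
      (measurePreserving_arrowProdEquivProdArrow ℝ ℝ (Fin L) (fun _ => m) (fun _ => m))
    have hcomp := (hpres2.comp hpres1)
    rw [hψ, ← Measure.map_map (e2.measurable.comp e1.measurable) hVmeas, hVlaw]
    exact hcomp.map_eq
  -- min functionals
  set m2 : ℝ × ℝ → ℝ := fun p => min p.1 p.2 with hm2def
  have hm2 : Measurable m2 := measurable_fst.min measurable_snd
  set Blt : Set ((ℝ × ℝ) × (ℝ × ℝ)) := {p | m2 p.2 < m2 p.1} with hBlt
  have hBltmeas : MeasurableSet Blt :=
    measurableSet_lt (hm2.comp measurable_snd) (hm2.comp measurable_fst)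
  have hSmin : ∀ k ω, S k ω = m2 (W ω k) := fun k ω => hSdef k ω
  -- ties are null
  have hties : ∀ k l : Fin L, ¬ k = l → μ {ω | S k ω = S l ω} = 0 := by
    intro k l hkl
    set B : Fin L → Set ((ℝ × ℝ) × (ℝ × ℝ)) :=
      fun j => if j = k then {p : (ℝ × ℝ) × (ℝ × ℝ) | m2 p.2 = m2 p.1} else Set.univ with hB
    have hBmeas : ∀ j, MeasurableSet (B j) := by
      intro j
      by_cases hj : j = k
      · simp only [hB, if_pos hj]
        exact measurableSet_eq_fun (hm2.comp measurable_snd) (hm2.comp measurable_fst)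
      · simp only [hB, if_neg hj]; exact MeasurableSet.univ
    have hset : {ω | S k ω = S l ω}
        = W ⁻¹' {g : Fin L → ℝ × ℝ | g l ∈ (Set.univ : Set (ℝ × ℝ))
            ∧ ∀ j, ¬ j = l → (g l, g j) ∈ B j} := by
      ext ω
      simp only [Set.mem_setOf_eq, Set.mem_preimage, Set.mem_univ, true_and]
      constructor
      · intro h j hj
        simp only [hB]
        by_cases hjk : j = k
        · subst hjk
          rw [if_pos rfl]
          show m2 (W ω j) = m2 (W ω l)
          rw [← hSmin, ← hSmin]; exact h
        · rw [if_neg hjk]; trivial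
      · intro h
        have h2 := h k hkl
        simp only [hB, if_pos rfl] at h2
        have h3 : m2 (W ω k) = m2 (W ω l) := h2
        rw [hSmin k ω, hSmin l ω]; exact h3
    rw [hset, ← Measure.map_apply hWmeas (aux_meas_cond l _ MeasurableSet.univ B hBmeas),
      hWlaw, aux_pi_cond mp l _ MeasurableSet.univ B hBmeas]
    have hzero : ∀ z : ℝ × ℝ,
        (∏ j : {j : Fin L // ¬ j = l}, mp {w | (z, w) ∈ B j.1}) = 0 := by
      intro z
      refine Finset.prod_eq_zero (Finset.mem_univ (⟨k, hkl⟩ : {j : Fin L // ¬ j = l})) ?_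
      have : {w : ℝ × ℝ | (z, w) ∈ B k} = {w : ℝ × ℝ | min w.1 w.2 = min z.1 z.2} := by
        rw [hB]; simp only [if_pos rfl]; rfl
      rw [this, hmp, hm, mp_min_eq]
    simp only [hzero, lintegral_const, zero_mul, lintegral_zero]
  -- a.e. identification of the argmax event
  have hae : ∀ l : Fin L, (l₀ ⁻¹' {l} : Set Ω)
      =ᵐ[μ] {ω | ∀ k, ¬ k = l → S k ω < S l ω} := by
    intro l
    refine (MeasureTheory.ae_eq_set).mpr ⟨?_, ?_⟩
    · refine measure_mono_null (fun ω hω => ?_)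
        (measure_iUnion_null fun k => measure_iUnion_null fun hk => hties k l hk)
      obtain ⟨hP, hE⟩ := hω
      have hPl : l₀ ω = l := hP
      simp only [Set.mem_setOf_eq, not_forall] at hE
      obtain ⟨k, hk, hle⟩ := hE
      rw [not_lt] at hle
      have h1 : S k ω ≤ S l ω := by rw [← hPl]; exact hl₀ ω k
      refine Set.mem_iUnion.mpr ⟨k, Set.mem_iUnion.mpr ⟨hk, le_antisymm h1 hle⟩⟩
    · have : {ω | ∀ k, ¬ k = l → S k ω < S l ω} \ (l₀ ⁻¹' {l}) = ∅ := by
        ext ω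
        simp only [Set.mem_diff, Set.mem_setOf_eq, Set.mem_preimage,
          Set.mem_singleton_iff, Set.mem_empty_iff_false, iff_false, not_and, not_not]
        intro hE
        by_contra hne
        exact absurd (hl₀ ω l) (not_le.mpr (hE (l₀ ω) hne))
      rw [this, measure_empty]
  -- measurability of Z
  have hZ₁meas : Measurable Z₁ := by
    have : Z₁ = fun ω => ∑ l : Fin L, Set.indicator (l₀ ⁻¹' {l}) (X l) ω := by
      funext ω
      rw [hZ₁ ω, Finset.sum_eq_single (l₀ ω)]
      · exact (Set.indicator_of_mem (show ω ∈ l₀ ⁻¹' {l₀ ω} from rfl) (X (l₀ ω))).symm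
      · intro j _ hj
        exact Set.indicator_of_notMem (fun h => hj (h.symm)) _
      · intro h; exact absurd (Finset.mem_univ _) h
    rw [this]
    exact Finset.measurable_sum _ fun l _ =>
      (hX l).indicator (hl₀meas (measurableSet_singleton l))
  have hZ₂meas : Measurable Z₂ := by
    have : Z₂ = fun ω => ∑ l : Fin L, Set.indicator (l₀ ⁻¹' {l}) (Y l) ω := by
      funext ω
      rw [hZ₂ ω, Finset.sum_eq_single (l₀ ω)]
      · exact (Set.indicator_of_mem (show ω ∈ l₀ ⁻¹' {l₀ ω} from rfl) (Y (l₀ ω))).symm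
      · intro j _ hj
        exact Set.indicator_of_notMem (fun h => hj (h.symm)) _
      · intro h; exact absurd (Finset.mem_univ _) h
    rw [this]
    exact Finset.measurable_sum _ fun l _ =>
      (hY l).indicator (hl₀meas (measurableSet_singleton l))
  have hZmeas : Measurable (fun ω => (Z₁ ω, Z₂ ω)) := hZ₁meas.prodMk hZ₂meas
  -- key identity
  have hFmeas : Measurable (fun z : ℝ × ℝ => mp {w | m2 w < m2 z}) := by
    have : (fun z : ℝ × ℝ => mp {w | m2 w < m2 z}) = fun z => mp (Prod.mk z ⁻¹' Blt) := rfl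
    rw [this]
    exact measurable_measure_prodMk_left hBltmeas
  have key : ∀ A : Set (ℝ × ℝ), MeasurableSet A →
      μ.map (fun ω => (Z₁ ω, Z₂ ω)) A
        = ∫⁻ z in A, (L : ℝ≥0∞) * (mp {w | m2 w < m2 z}) ^ (L - 1) ∂mp := by
    intro A hA
    rw [Measure.map_apply hZmeas hA]
    have hdecomp : (fun ω => (Z₁ ω, Z₂ ω)) ⁻¹' A
        = ⋃ l : Fin L, (l₀ ⁻¹' {l} ∩ (fun ω => (X l ω, Y l ω)) ⁻¹' A) := by
      ext ω
      simp only [Set.mem_preimage, Set.mem_iUnion, Set.mem_inter_iff,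
        Set.mem_singleton_iff]
      constructor
      · intro h
        exact ⟨l₀ ω, rfl, by rw [← hZ₁ ω, ← hZ₂ ω]; exact h⟩
      · rintro ⟨l, hl, hmem⟩
        rw [hZ₁ ω, hZ₂ ω, hl]
        exact hmem
    have hdisj : Pairwise (Function.onFun Disjoint
        (fun l : Fin L => l₀ ⁻¹' {l} ∩ (fun ω => (X l ω, Y l ω)) ⁻¹' A)) := by
      intro i j hij
      refine Set.disjoint_left.mpr fun ω hi hj => ?_
      exact hij ((hi.1 : l₀ ω = i).symm.trans (hj.1 : l₀ ω = j))
    have hmeasl : ∀ l : Fin L, MeasurableSet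
        (l₀ ⁻¹' {l} ∩ (fun ω => (X l ω, Y l ω)) ⁻¹' A) := fun l =>
      (hl₀meas (measurableSet_singleton l)).inter (((hX l).prodMk (hY l)) hA)
    rw [hdecomp, measure_iUnion hdisj hmeasl]
    have hterm : ∀ l : Fin L,
        μ (l₀ ⁻¹' {l} ∩ (fun ω => (X l ω, Y l ω)) ⁻¹' A)
          = ∫⁻ z in A, (mp {w | m2 w < m2 z}) ^ (L - 1) ∂mp := by
      intro l
      have h1 : μ (l₀ ⁻¹' {l} ∩ (fun ω => (X l ω, Y l ω)) ⁻¹' A)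
          = μ ({ω | ∀ k, ¬ k = l → S k ω < S l ω}
              ∩ (fun ω => (X l ω, Y l ω)) ⁻¹' A) :=
        measure_congr ((hae l).inter (Filter.EventuallyEq.refl _ _))
      rw [h1]
      have h2 : {ω | ∀ k, ¬ k = l → S k ω < S l ω} ∩ (fun ω => (X l ω, Y l ω)) ⁻¹' A
          = W ⁻¹' {g : Fin L → ℝ × ℝ | g l ∈ A ∧ ∀ k, ¬ k = l → (g l, g k) ∈ Blt} := by
        ext ω
        simp only [Set.mem_inter_iff, Set.mem_setOf_eq, Set.mem_preimage, hBlt]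
        constructor
        · rintro ⟨hE, hA'⟩
          refine ⟨hA', fun k hk => ?_⟩
          show m2 (W ω k) < m2 (W ω l)
          rw [← hSmin, ← hSmin]; exact hE k hk
        · rintro ⟨hA', hE⟩
          refine ⟨fun k hk => ?_, hA'⟩
          have h3 : m2 (W ω k) < m2 (W ω l) := hE k hk
          rw [hSmin k ω, hSmin l ω]; exact h3
      rw [h2, ← Measure.map_apply hWmeas (aux_meas_cond l A hA (fun _ => Blt)
        (fun _ => hBltmeas)), hWlaw,
        aux_pi_cond mp l A hA (fun _ => Blt) (fun _ => hBltmeas)]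
      refine lintegral_congr fun z => ?_
      have hcard : Fintype.card {k : Fin L // ¬ k = l} = L - 1 := by
        rw [Fintype.card_subtype_compl, Fintype.card_subtype_eq, Fintype.card_fin]
      rw [Finset.prod_const, Finset.card_univ, hcard]
      rfl
    simp_rw [hterm]
    rw [tsum_fintype, Finset.sum_const, Finset.card_univ, Fintype.card_fin, nsmul_eq_mul,
      ← lintegral_const_mul _ (hFmeas.pow_const _)]
  -- conclude
  ext A hA
  rw [key A hA, withDensity_apply _ hA]
  have hDmeas : Measurable (fun z : ℝ × ℝ => exponentialPDF 1 z.1 * exponentialPDF 1 z.2) :=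
    (((measurable_exponentialPDFReal 1).ennreal_ofReal).comp measurable_fst).mul
      (((measurable_exponentialPDFReal 1).ennreal_ofReal).comp measurable_snd)
  have hHmeas : Measurable (fun z : ℝ × ℝ => (L : ℝ≥0∞) * (mp {w | m2 w < m2 z}) ^ (L - 1)) :=
    (hFmeas.pow_const _).const_mul _
  have hgen : ∀ H : ℝ × ℝ → ℝ≥0∞, Measurable H →
      ∫⁻ z in A, H z ∂mp
        = ∫⁻ z in A, (fun z : ℝ × ℝ => exponentialPDF 1 z.1 * exponentialPDF 1 z.2) z
            * H z ∂volume := by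
    intro H hH
    rw [hmp, hm, mp_eq_withDensity,
      setLIntegral_withDensity_eq_setLIntegral_mul volume hDmeas hH hA]
    rfl
  have hchange := hgen _ hHmeas
  rw [hchange]
  refine lintegral_congr fun z => ?_
  dsimp only
  by_cases hz : 0 ≤ z.1 ∧ 0 ≤ z.2
  · obtain ⟨h1, h2⟩ := hz
    rw [if_pos ⟨h1, h2⟩]
    have hminz : (0 : ℝ) ≤ min z.1 z.2 := le_min h1 h2
    have hFz : mp {w | m2 w < m2 z} = ENNReal.ofReal (1 - Real.exp (-(2 * min z.1 z.2))) := by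
      rw [hmp, hm]
      exact mp_min_lt (min z.1 z.2) hminz
    have hbase : (0 : ℝ) ≤ 1 - Real.exp (-(2 * min z.1 z.2)) :=
      sub_nonneg.mpr (Real.exp_le_one_iff.mpr (by nlinarith))
    rw [hFz, exponentialPDF_of_nonneg h1, exponentialPDF_of_nonneg h2,
      ← ENNReal.ofReal_pow hbase,
      show ((L : ℕ) : ℝ≥0∞) = ENNReal.ofReal (L : ℝ) from (ENNReal.ofReal_natCast L).symm,
      ← ENNReal.ofReal_mul (by positivity),
      ← ENNReal.ofReal_mul (by positivity),
      ← ENNReal.ofReal_mul (by positivity)]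
    congr 1
    have hexp : Real.exp (-(z.1 + z.2)) = Real.exp (-z.1) * Real.exp (-z.2) := by
      rw [← Real.exp_add]; ring_nf
    have hexp2 : Real.exp (-2 * min z.1 z.2) = Real.exp (-(2 * min z.1 z.2)) := by
      ring_nf
    rw [hexp, hexp2]
    ring
  · rw [if_neg hz]
    rcases not_and_or.mp hz with h | h
    · rw [not_le] at h
      rw [exponentialPDF_of_neg h]
      simp
    · rw [not_le] at h
      rw [exponentialPDF_of_neg h]
      simp
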